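/- With M₀, M₁ as in the rotation-matrix construction, trace(M₁M₀) = -1 if and only if cos(θ₀ - θ₁) = cot(ρ₀/2) cot(ρ₁/2), assuming sin(ρ₀/2) ≠ 0 and sin(ρ₁/2) ≠ 0. -/

import Mathlib

open Real Matrix

/-- The rotation matrix `M_k` determined by the angles `ρ` and `θ`. -/
noncomputable def Mrot (ρ θ : ℝ) : Matrix (Fin 3) (Fin 3) ℝ :=
  !![Real.cos ρ, Real.sin ρ * Real.cos θ, Real.sin ρ * Real.sin θ;
     -Real.sin ρ * Real.cos θ, Real.cos ρ * Real.cos θ ^ 2 + Real.sin θ ^ 2,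
       (Real.cos ρ - 1) * Real.cos θ * Real.sin θ;
     -Real.sin ρ * Real.sin θ, (Real.cos ρ - 1) * Real.cos θ * Real.sin θ,
       Real.cos ρ * Real.sin θ ^ 2 + Real.cos θ ^ 2]

/-- `trace(M₁M₀) = -1` iff `cos(θ₀ - θ₁) = cot(ρ₀/2)cot(ρ₁/2)`. -/
theorem trace_eq_neg_one_iff (ρ₀ ρ₁ θ₀ θ₁ : ℝ)
    (h₀ : Real.sin (ρ₀ / 2) ≠ 0) (h₁ : Real.sin (ρ₁ / 2) ≠ 0) :
    Matrix.trace (Mrot ρ₁ θ₁ * Mrot ρ₀ θ₀) = -1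
      ↔ Real.cos (θ₀ - θ₁) = Real.cot (ρ₀ / 2) * Real.cot (ρ₁ / 2) := by
  set a0 := Real.cos (ρ₀ / 2) with ha0
  set b0 := Real.sin (ρ₀ / 2) with hb0
  set a1 := Real.cos (ρ₁ / 2) with ha1
  set b1 := Real.sin (ρ₁ / 2) with hb1
  have hc0 : Real.cos ρ₀ = 1 - 2 * b0 ^ 2 := by
    have h := Real.cos_two_mul (ρ₀ / 2)
    rw [show 2 * (ρ₀ / 2) = ρ₀ by ring] at h
    have h2 := Real.sin_sq_add_cos_sq (ρ₀ / 2)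
    rw [h, ← ha0, ← hb0] at *
    linarith
  have hc1 : Real.cos ρ₁ = 1 - 2 * b1 ^ 2 := by
    have h := Real.cos_two_mul (ρ₁ / 2)
    rw [show 2 * (ρ₁ / 2) = ρ₁ by ring] at h
    have h2 := Real.sin_sq_add_cos_sq (ρ₁ / 2)
    rw [h, ← ha1, ← hb1] at *
    linarith
  have hs0 : Real.sin ρ₀ = 2 * a0 * b0 := by
    have := Real.sin_two_mul (ρ₀ / 2)
    rw [show 2 * (ρ₀ / 2) = ρ₀ by ring] at this
    rw [this, ha0, hb0]; ring
  have hs1 : Real.sin ρ₁ = 2 * a1 * b1 := by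
    have := Real.sin_two_mul (ρ₁ / 2)
    rw [show 2 * (ρ₁ / 2) = ρ₁ by ring] at this
    rw [this, ha1, hb1]; ring
  have key : Matrix.trace (Mrot ρ₁ θ₁ * Mrot ρ₀ θ₀) + 1
      = 4 * (a0 * a1 - b0 * b1 * Real.cos (θ₀ - θ₁)) ^ 2 := by
    simp [Mrot, Matrix.trace_fin_three, Matrix.mul_fin_three]
    rw [Real.cos_sub, hc0, hc1, hs0, hs1]
    linear_combination (-4 * a1 ^ 2) * Real.sin_sq_add_cos_sq (ρ₀ / 2)
      + (4 * b0 ^ 2 - 4) * Real.sin_sq_add_cos_sq (ρ₁ / 2)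
      + (2 * Real.sin θ₁ ^ 2 + 2 * Real.cos θ₁ ^ 2 - 2 * b1 ^ 2 * Real.sin θ₁ ^ 2
          - 2 * b1 ^ 2 * Real.cos θ₁ ^ 2 - 2 * b0 ^ 2) * Real.sin_sq_add_cos_sq θ₀
      + (2 - 2 * b1 ^ 2 - 2 * b0 ^ 2 * Real.sin θ₀ ^ 2
          - 2 * b0 ^ 2 * Real.cos θ₀ ^ 2) * Real.sin_sq_add_cos_sq θ₁
  rw [Real.cot_eq_cos_div_sin, Real.cot_eq_cos_div_sin]
  constructor
  · intro h
    have h2 : (a0 * a1 - b0 * b1 * Real.cos (θ₀ - θ₁)) ^ 2 = 0 := by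
      have := key; rw [h] at this; linarith
    have h3 : a0 * a1 - b0 * b1 * Real.cos (θ₀ - θ₁) = 0 := by
      exact pow_eq_zero_iff (by norm_num) |>.mp h2
    rw [← ha0, ← hb0, ← ha1, ← hb1]
    field_simp
    nlinarith [h3]
  · intro h
    have h3 : a0 * a1 - b0 * b1 * Real.cos (θ₀ - θ₁) = 0 := by
      rw [← ha0, ← hb0, ← ha1, ← hb1] at h
      field_simp at h
      nlinarith [h]
    nlinarith [key, h3]
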